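/- Let F : ℝⁿ×ℝˡ → ℝᵖ be a C¹ map and m ≥ 1 a real number, and suppose there exist ε, δ > 0 and a neighborhood U of 0 in ℝⁿ×ℝˡ such that κ(ρ(u)^{1−m}·∇_x F(u)) ≥ ε for every u ∈ U with ρ(u)^{1−m}·‖F(u)‖ ≤ δ, where ρ(u) = ‖u‖. Then there exists a constant C₀ > 0 such that for every u = (x,λ) ∈ U with ρ(u)^{1−m}·‖F(u)‖ ≤ δ and u ≠ 0, the Kuo pseudo-distance satisfies d_x∇F(u) = min_{1≤j≤p} ‖N(F,j,u)‖ ≥ C₀·‖u‖^{m−1}; in particular d_x∇F(u) ≥ C₀·‖x‖^{m−1}. -/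

import Mathlib

noncomputable section

/-- The Euclidean norm of `u = (x,λ) ∈ ℝⁿ×ℝˡ`. -/
def rho {n l : ℕ} (u : EuclideanSpace ℝ (Fin n) × EuclideanSpace ℝ (Fin l)) : ℝ :=
  Real.sqrt (‖u.1‖ ^ 2 + ‖u.2‖ ^ 2)

/-- The gradient of the `i`-th component of `F` in the `x`-variables. -/
def gradX {n l p : ℕ} (F : EuclideanSpace ℝ (Fin n) × EuclideanSpace ℝ (Fin l) →
    EuclideanSpace ℝ (Fin p)) (i : Fin p)
    (u : EuclideanSpace ℝ (Fin n) × EuclideanSpace ℝ (Fin l)) : EuclideanSpace ℝ (Fin n) :=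
  WithLp.toLp 2 (fun j => fderiv ℝ F u (EuclideanSpace.single j 1, 0) i)

/-- `N(F,j,u)`: the gradient `∇ₓF_j(u)` minus its orthogonal projection onto the span of
the other gradients. -/
def NK {n l p : ℕ} (F : EuclideanSpace ℝ (Fin n) × EuclideanSpace ℝ (Fin l) →
    EuclideanSpace ℝ (Fin p)) (j : Fin p)
    (u : EuclideanSpace ℝ (Fin n) × EuclideanSpace ℝ (Fin l)) : EuclideanSpace ℝ (Fin n) :=
  gradX F j u - (Submodule.orthogonalProjectionOnto
    (Submodule.span ℝ ((fun i => gradX F i u) '' {i | i ≠ j})) (gradX F j u) :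
      EuclideanSpace ℝ (Fin n))

/-- `κ(A) = inf{‖Aᵀα‖ : α ∈ ℝᵖ, ‖α‖ = 1}` for a real `p×n` matrix. -/
def kappa {p n : ℕ} (A : Matrix (Fin p) (Fin n) ℝ) : ℝ :=
  ⨅ α : {a : EuclideanSpace ℝ (Fin p) // ‖a‖ = 1},
    ‖(show EuclideanSpace ℝ (Fin n) from WithLp.toLp 2 (fun j => ∑ i, (α : EuclideanSpace ℝ (Fin p)) i * A i j))‖

theorem eucl_sum_apply {p q : ℕ} (α : Fin p → ℝ) (g : Fin p → EuclideanSpace ℝ (Fin q))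
    (k : Fin q) : (∑ x : Fin p, α x • g x) k = ∑ x : Fin p, α x * g x k := by
  induction (Finset.univ : Finset (Fin p)) using Finset.induction with
  | empty => simp
  | insert _ _ h ih => rw [Finset.sum_insert h, Finset.sum_insert h, ← ih]; rfl


set_option maxHeartbeats 1000000 in
/-- if `F` is `C¹` and `κ(ρ(u)^{1-m}·∇ₓF(u)) ≥ ε` on
`{u ∈ U : ρ(u)^{1-m}‖F(u)‖ ≤ δ}` (with `m ≥ 1`), then there is `C₀ > 0` such that on the
same set (off the origin) the Kuo pseudo-distance satisfies
`min_j ‖N(F,j,u)‖ ≥ C₀·ρ(u)^{m-1} ≥ C₀·‖x‖^{m-1}`. -/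
theorem kuoDist_ge_of_ND {n l p : ℕ}
    (F : EuclideanSpace ℝ (Fin n) × EuclideanSpace ℝ (Fin l) → EuclideanSpace ℝ (Fin p))
    (hF : ContDiff ℝ 1 F) (m : ℝ) (hm : 1 ≤ m)
    (ε δ : ℝ) (hε : 0 < ε) (hδ : 0 < δ)
    (U : Set (EuclideanSpace ℝ (Fin n) × EuclideanSpace ℝ (Fin l))) (hU : U ∈ nhds 0)
    (hND : ∀ u ∈ U, rho u ^ (1 - m) * ‖F u‖ ≤ δ →
      ε ≤ kappa (Matrix.of fun i j =>
        rho u ^ (1 - m) * fderiv ℝ F u (EuclideanSpace.single j 1, 0) i)) :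
    ∃ C₀ > (0 : ℝ), ∀ u ∈ U, rho u ^ (1 - m) * ‖F u‖ ≤ δ → u ≠ 0 →
      C₀ * rho u ^ (m - 1) ≤ ⨅ j : Fin p, ‖NK F j u‖ ∧
      C₀ * ‖u.1‖ ^ (m - 1) ≤ ⨅ j : Fin p, ‖NK F j u‖ := by
  refine ⟨ε, hε, ?_⟩
  intro u hu hδu hu0
  have hρ : 0 < rho u := by
    rw [rho, Real.sqrt_pos]
    have h1 : u.1 ≠ 0 ∨ u.2 ≠ 0 := by
      by_contra h; push_neg at h; exact hu0 (Prod.ext_iff.2 ⟨h.1, h.2⟩)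
    rcases h1 with h | h
    · nlinarith [norm_pos_iff.2 h, sq_nonneg ‖u.2‖]
    · nlinarith [norm_pos_iff.2 h, sq_nonneg ‖u.1‖]
  have hk := hND u hu hδu
  rcases Nat.eq_zero_or_pos p with hp | hp
  · exfalso
    haveI hempty : IsEmpty {a : EuclideanSpace ℝ (Fin p) // ‖a‖ = 1} := by
      refine ⟨fun a => ?_⟩
      have h0 : (a : EuclideanSpace ℝ (Fin p)) = 0 := by
        ext i; exact absurd i.isLt (by omega)
      have h1 := a.2
      rw [h0, norm_zero] at h1
      exact one_ne_zero h1.symm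
    have h0 : kappa (Matrix.of fun i j =>
        rho u ^ (1 - m) * fderiv ℝ F u (EuclideanSpace.single j 1, 0) i) = 0 :=
      Real.iInf_of_isEmpty _
    rw [h0] at hk; linarith
  have hpne : Nonempty (Fin p) := ⟨⟨0, hp⟩⟩
  have key : ∀ j : Fin p, ε * rho u ^ (m - 1) ≤ ‖NK F j u‖ := by
    intro j
    have hmem2 : (Submodule.orthogonalProjectionOnto
        (Submodule.span ℝ ((fun i => gradX F i u) '' {i | i ≠ j})) (gradX F j u) :
          EuclideanSpace ℝ (Fin n)) ∈
        Submodule.span ℝ (Set.range (fun i : ↑{i : Fin p | i ≠ j} => gradX F (↑i) u)) := by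
      have hseteq : ((fun i => gradX F i u) '' {i : Fin p | i ≠ j})
          = Set.range (fun i : ↑{i : Fin p | i ≠ j} => gradX F (↑i) u) :=
        Set.image_eq_range _ _
      rw [← hseteq]; exact Submodule.coe_mem _
    rw [Submodule.mem_span_range_iff_exists_fun] at hmem2
    obtain ⟨c, hc⟩ := hmem2
    set α : EuclideanSpace ℝ (Fin p) := WithLp.toLp 2 (fun i => if h : i = j then 1 else -c ⟨i, h⟩) with hα
    have hαj : α j = 1 := by simp [hα]
    have hNsum : NK F j u = ∑ i : Fin p, α i • gradX F i u := by
      have hsplit : ∑ i : Fin p, α i • gradX F i u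
          = α j • gradX F j u + ∑ i ∈ Finset.univ.erase j, α i • gradX F i u :=
        (Finset.add_sum_erase _ (fun i => α i • gradX F i u) (Finset.mem_univ j)).symm
      have h2 : ∑ i ∈ Finset.univ.erase j, α i • gradX F i u
          = ∑ i : ↑{i : Fin p | i ≠ j}, α (↑i) • gradX F (↑i) u :=
        Finset.sum_subtype _ (fun x => by simp) _
      have h3 : ∑ i : ↑{i : Fin p | i ≠ j}, α (↑i) • gradX F (↑i) u
          = -∑ i : ↑{i : Fin p | i ≠ j}, c i • gradX F (↑i) u := by
        rw [← Finset.sum_neg_distrib]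
        refine Finset.sum_congr rfl fun i _ => ?_
        have hij : (↑i : Fin p) ≠ j := i.2
        simp only [hα, dif_neg hij, neg_smul, Subtype.coe_eta]
      rw [NK, ← hc, hsplit, hαj, one_smul, h2, h3, ← sub_eq_add_neg]
    have hαnorm : 1 ≤ ‖α‖ := by
      rw [EuclideanSpace.norm_eq]
      have h1 : (1 : ℝ) = Real.sqrt (‖α j‖ ^ 2) := by rw [hαj]; simp
      rw [h1]
      refine Real.sqrt_le_sqrt ?_
      exact Finset.single_le_sum (f := fun i => ‖α i‖ ^ 2)
        (fun i _ => sq_nonneg _) (Finset.mem_univ j)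
    have hα0 : α ≠ 0 := by
      intro h; rw [h, norm_zero] at hαnorm; linarith
    set A : Matrix (Fin p) (Fin n) ℝ := Matrix.of fun i k =>
      rho u ^ (1 - m) * fderiv ℝ F u (EuclideanSpace.single k 1, 0) i with hA
    set w : EuclideanSpace ℝ (Fin n) := WithLp.toLp 2 (fun k => ∑ i, α i * A i k) with hw
    have hwNK : w = rho u ^ (1 - m) • NK F j u := by
      ext k
      have hsum : NK F j u k = ∑ i : Fin p, α i * gradX F i u k := by
        rw [hNsum, eucl_sum_apply]
      simp only [hw, PiLp.smul_apply, smul_eq_mul, hsum, Finset.mul_sum]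
      refine Finset.sum_congr rfl (fun i _ => ?_)
      simp only [hA, Matrix.of_apply]
      have hgk : gradX F i u k = fderiv ℝ F u (EuclideanSpace.single k 1, 0) i := rfl
      rw [hgk]; ring
    set β : EuclideanSpace ℝ (Fin p) := ‖α‖⁻¹ • α with hβ
    have hβnorm : ‖β‖ = 1 := by
      rw [hβ, norm_smul, norm_inv, norm_norm, inv_mul_cancel₀ (norm_ne_zero_iff.2 hα0)]
    have hκle : kappa A ≤ ‖α‖⁻¹ * ‖w‖ := by
      have hb : BddBelow (Set.range fun α : {a : EuclideanSpace ℝ (Fin p) // ‖a‖ = 1} =>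
          ‖(show EuclideanSpace ℝ (Fin n) from
            WithLp.toLp 2 (fun k => ∑ i, (α : EuclideanSpace ℝ (Fin p)) i * A i k))‖) := by
        refine ⟨0, fun x hx => ?_⟩
        obtain ⟨y, rfl⟩ := hx
        exact norm_nonneg _
      have hle := ciInf_le hb (⟨β, hβnorm⟩ :
        {a : EuclideanSpace ℝ (Fin p) // ‖a‖ = 1})
      refine hle.trans_eq ?_
      have heq : (show EuclideanSpace ℝ (Fin n) from WithLp.toLp 2 (fun k => ∑ i, β i * A i k))
          = ‖α‖⁻¹ • w := by
        ext k
        simp only [hβ, hw, PiLp.smul_apply, smul_eq_mul, Finset.mul_sum]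
        exact Finset.sum_congr rfl (fun i _ => by ring)
      rw [heq, norm_smul, norm_inv, norm_norm]
    have hεw : ε ≤ ‖w‖ := by
      have h1 : ε ≤ ‖α‖⁻¹ * ‖w‖ := le_trans hk hκle
      have h2 : ‖α‖⁻¹ * ‖w‖ ≤ ‖w‖ := by
        have h3 : ‖α‖⁻¹ ≤ 1 := by
          rw [inv_le_one_iff₀]; right; exact hαnorm
        nlinarith [norm_nonneg w]
      linarith
    have hwn : ‖w‖ = rho u ^ (1 - m) * ‖NK F j u‖ := by
      rw [hwNK, norm_smul, Real.norm_eq_abs,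
        abs_of_nonneg (Real.rpow_nonneg hρ.le _)]
    rw [hwn] at hεw
    have hmul : rho u ^ (m - 1) * rho u ^ (1 - m) = 1 := by
      rw [← Real.rpow_add hρ]
      norm_num
    calc ε * rho u ^ (m - 1) ≤ (rho u ^ (1 - m) * ‖NK F j u‖) * rho u ^ (m - 1) := by
          nlinarith [Real.rpow_nonneg hρ.le (m - 1)]
      _ = ‖NK F j u‖ := by
          rw [mul_comm (rho u ^ (1 - m)) _, mul_assoc,
            mul_comm (rho u ^ (1 - m)) _, hmul, mul_one]
  have h1 : ε * rho u ^ (m - 1) ≤ ⨅ j : Fin p, ‖NK F j u‖ := le_ciInf key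
  refine ⟨h1, le_trans ?_ h1⟩
  have hx : ‖u.1‖ ≤ rho u :=
    Real.le_sqrt_of_sq_le (by nlinarith [sq_nonneg ‖u.2‖])
  have h2 := Real.rpow_le_rpow (norm_nonneg u.1) hx (by linarith : (0:ℝ) ≤ m - 1)
  exact mul_le_mul_of_nonneg_left h2 hε.le


end
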